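/- Let ρ be a two-qubit Schmidt-correlated state with coefficients c1, c2, c4, and let ρ' be a two-qubit Schmidt-correlated state with coefficients c1', c2', c4'. Then ρ' is LU equivalent to ρ if and only if there exists a real number δ such that either (c1' = c1, c4' = c4 and c2' = c2·e^{iδ}) or (c1' = c4, c4' = c1 and c2' = c2·e^{iδ}). -/

import Mathlib

open Matrix Kronecker

/-- The two-qubit Schmidt-correlated state
`ρ = c1|00⟩⟨00| + c2|00⟩⟨11| + conj(c2)|11⟩⟨00| + c4|11⟩⟨11|`. -/
noncomputable def scState (c1 c4 : ℝ) (c2 : ℂ) :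
    Matrix (Fin 2 × Fin 2) (Fin 2 × Fin 2) ℂ :=
  Matrix.of fun p q =>
    if p = (0, 0) ∧ q = (0, 0) then (c1 : ℂ)
    else if p = (0, 0) ∧ q = (1, 1) then c2
    else if p = (1, 1) ∧ q = (0, 0) then (starRingEnd ℂ) c2
    else if p = (1, 1) ∧ q = (1, 1) then (c4 : ℂ)
    else 0

/-- Local unitary equivalence of two-qubit states. -/
def LUequiv (ρ' ρ : Matrix (Fin 2 × Fin 2) (Fin 2 × Fin 2) ℂ) : Prop :=
  ∃ U1 U2 : Matrix (Fin 2) (Fin 2) ℂ,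
    U1 ∈ Matrix.unitaryGroup (Fin 2) ℂ ∧ U2 ∈ Matrix.unitaryGroup (Fin 2) ℂ ∧
    ρ' = (U1 ⊗ₖ U2) * ρ * (U1 ⊗ₖ U2)ᴴ

namespace SCaux

lemma kron_conjT (A B : Matrix (Fin 2) (Fin 2) ℂ) : (A ⊗ₖ B)ᴴ = Aᴴ ⊗ₖ Bᴴ := by
  ext ⟨i,j⟩ ⟨k,l⟩
  simp [conjTranspose_apply, kroneckerMap_apply, mul_comm]

lemma ptrace_conj (U1 U2 : Matrix (Fin 2) (Fin 2) ℂ) (hU2 : U2ᴴ * U2 = 1)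
    (M : Matrix (Fin 2 × Fin 2) (Fin 2 × Fin 2) ℂ) (i k : Fin 2) :
    ∑ j, ((U1 ⊗ₖ U2) * M * (U1 ⊗ₖ U2)ᴴ) (i, j) (k, j)
      = (U1 * (Matrix.of fun r t => ∑ s, M (r, s) (t, s)) * U1ᴴ) i k := by
  have key : ∀ s u : Fin 2, ∑ j, U2 j s * (starRingEnd ℂ) (U2 j u)
      = if u = s then 1 else 0 := by
    intro s u
    have := congrFun (congrFun hU2 u) s
    simp [Matrix.mul_apply, Matrix.conjTranspose_apply, Matrix.one_apply] at this
    simpa [mul_comm] using this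
  simp only [Matrix.mul_apply, Matrix.conjTranspose_apply, Matrix.kroneckerMap_apply,
    Matrix.of_apply, Fintype.sum_prod_type, Fin.sum_univ_two, star_mul', Complex.star_def]
  have k00 := key 0 0; have k01 := key 0 1; have k10 := key 1 0; have k11 := key 1 1
  simp [Fin.sum_univ_two] at k00 k01 k10 k11
  linear_combination
    (U1 i 0 * (starRingEnd ℂ) (U1 k 0) * M (0,0) (0,0) + U1 i 0 * (starRingEnd ℂ) (U1 k 1) * M (0,0) (1,0) + U1 i 1 * (starRingEnd ℂ) (U1 k 0) * M (1,0) (0,0) + U1 i 1 * (starRingEnd ℂ) (U1 k 1) * M (1,0) (1,0)) * k00 +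
    (U1 i 0 * (starRingEnd ℂ) (U1 k 0) * M (0,0) (0,1) + U1 i 0 * (starRingEnd ℂ) (U1 k 1) * M (0,0) (1,1) + U1 i 1 * (starRingEnd ℂ) (U1 k 0) * M (1,0) (0,1) + U1 i 1 * (starRingEnd ℂ) (U1 k 1) * M (1,0) (1,1)) * k01 +
    (U1 i 0 * (starRingEnd ℂ) (U1 k 0) * M (0,1) (0,0) + U1 i 0 * (starRingEnd ℂ) (U1 k 1) * M (0,1) (1,0) + U1 i 1 * (starRingEnd ℂ) (U1 k 0) * M (1,1) (0,0) + U1 i 1 * (starRingEnd ℂ) (U1 k 1) * M (1,1) (1,0)) * k10 +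
    (U1 i 0 * (starRingEnd ℂ) (U1 k 0) * M (0,1) (0,1) + U1 i 0 * (starRingEnd ℂ) (U1 k 1) * M (0,1) (1,1) + U1 i 1 * (starRingEnd ℂ) (U1 k 0) * M (1,1) (0,1) + U1 i 1 * (starRingEnd ℂ) (U1 k 1) * M (1,1) (1,1)) * k11

lemma ptrace_sc (c1 c4 : ℝ) (c2 : ℂ) :
    (Matrix.of fun r t => ∑ s, scState c1 c4 c2 (r, s) (t, s))
      = Matrix.diagonal ![(c1 : ℂ), (c4 : ℂ)] := by
  ext r t
  fin_cases r <;> fin_cases t <;>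
    simp [scState, Fin.sum_univ_two, Matrix.diagonal, Prod.ext_iff]

lemma trsq_sc (c1 c4 : ℝ) (c2 : ℂ) :
    Matrix.trace (scState c1 c4 c2 * scState c1 c4 c2)
      = (c1 : ℂ)^2 + (c4 : ℂ)^2 + 2 * Complex.normSq c2 := by
  simp [Matrix.trace, Matrix.diag, Matrix.mul_apply, Fintype.sum_prod_type,
    Fin.sum_univ_two, scState, Prod.ext_iff, Complex.mul_conj]
  rw [mul_comm ((starRingEnd ℂ) c2) c2, Complex.mul_conj]
  ring

lemma conj_inv_unitary (V M : Matrix (Fin 2 × Fin 2) (Fin 2 × Fin 2) ℂ) (hV : Vᴴ * V = 1) :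
    Matrix.trace (V * M * Vᴴ * (V * M * Vᴴ)) = Matrix.trace (M * M) := by
  have h : V * M * Vᴴ * (V * M * Vᴴ) = V * (M * M) * Vᴴ := by
    rw [show V * M * Vᴴ * (V * M * Vᴴ) = V * (M * (Vᴴ * V) * M) * Vᴴ by
      simp only [Matrix.mul_assoc], hV]
    simp [Matrix.mul_assoc]
  rw [h, Matrix.trace_mul_cycle, ← Matrix.mul_assoc, hV, Matrix.one_mul]

lemma conj_inv_unitary2 (V M : Matrix (Fin 2) (Fin 2) ℂ) (hV : Vᴴ * V = 1) :
    Matrix.trace (V * M * Vᴴ * (V * M * Vᴴ)) = Matrix.trace (M * M) := by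
  have h : V * M * Vᴴ * (V * M * Vᴴ) = V * (M * M) * Vᴴ := by
    rw [show V * M * Vᴴ * (V * M * Vᴴ) = V * (M * (Vᴴ * V) * M) * Vᴴ by
      simp only [Matrix.mul_assoc], hV]
    simp [Matrix.mul_assoc]
  rw [h, Matrix.trace_mul_cycle, ← Matrix.mul_assoc, hV, Matrix.one_mul]

lemma diag_conj_apply (d : (Fin 2 × Fin 2) → ℂ) (M : Matrix (Fin 2 × Fin 2) (Fin 2 × Fin 2) ℂ)
    (p q : Fin 2 × Fin 2) :
    (Matrix.diagonal d * M * (Matrix.diagonal d)ᴴ) p q = d p * M p q * star (d q) := by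
  rw [Matrix.diagonal_conjTranspose]
  simp [Matrix.diagonal_mul, Matrix.mul_diagonal, mul_assoc]

lemma L1 (c1 c4 : ℝ) (c2 a : ℂ) (ha : a * (starRingEnd ℂ) a = 1) :
    (Matrix.diagonal ![a, 1] ⊗ₖ (1 : Matrix (Fin 2) (Fin 2) ℂ)) * scState c1 c4 c2 *
      (Matrix.diagonal ![a, 1] ⊗ₖ (1 : Matrix (Fin 2) (Fin 2) ℂ))ᴴ = scState c1 c4 (a * c2) := by
  rw [← Matrix.diagonal_one, Matrix.diagonal_kronecker_diagonal]
  ext p q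
  rw [diag_conj_apply]
  obtain ⟨i, j⟩ := p; obtain ⟨k, l⟩ := q
  fin_cases i <;> fin_cases j <;> fin_cases k <;> fin_cases l <;>
    simp [scState, Prod.ext_iff] <;>
    first
      | linear_combination (c1 : ℂ) * ha
      | ring

def X2 : Matrix (Fin 2) (Fin 2) ℂ := ![![0, 1], ![1, 0]]

lemma L2 (c1 c4 : ℝ) (c2 : ℂ) :
    (X2 ⊗ₖ X2) * scState c1 c4 c2 * (X2 ⊗ₖ X2)ᴴ = scState c4 c1 ((starRingEnd ℂ) c2) := by
  ext ⟨i, j⟩ ⟨k, l⟩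
  fin_cases i <;> fin_cases j <;> fin_cases k <;> fin_cases l <;>
    simp [scState, Matrix.mul_apply, Fintype.sum_prod_type, Fin.sum_univ_two,
      Matrix.kroneckerMap_apply, Matrix.conjTranspose_apply, Prod.ext_iff] <;> simp [X2]

lemma diag_unitary (a : ℂ) (ha : a * (starRingEnd ℂ) a = 1) :
    Matrix.diagonal ![a, 1] ∈ Matrix.unitaryGroup (Fin 2) ℂ := by
  rw [Matrix.mem_unitaryGroup_iff]
  show Matrix.diagonal ![a, 1] * (Matrix.diagonal ![a, 1])ᴴ = 1
  rw [Matrix.diagonal_conjTranspose, Matrix.diagonal_mul_diagonal]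
  ext i j
  fin_cases i <;> fin_cases j <;>
    simp [Matrix.diagonal, Matrix.one_apply, Complex.star_def, ha]

lemma X2_unitary : X2 ∈ Matrix.unitaryGroup (Fin 2) ℂ := by
  rw [Matrix.mem_unitaryGroup_iff]
  show X2 * X2ᴴ = 1
  ext i j
  fin_cases i <;> fin_cases j <;>
    simp [Matrix.mul_apply, Fin.sum_univ_two, Matrix.one_apply, Matrix.conjTranspose_apply] <;> simp [X2]

lemma backward (c1 c4 : ℝ) (c2 : ℂ) (δ : ℝ) :
    LUequiv (scState c1 c4 (c2 * Complex.exp (δ * Complex.I))) (scState c1 c4 c2) ∧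
    LUequiv (scState c4 c1 (c2 * Complex.exp (δ * Complex.I))) (scState c1 c4 c2) := by
  set e := Complex.exp (δ * Complex.I) with he_def
  have he : e * (starRingEnd ℂ) e = 1 := by
    rw [he_def, ← Complex.exp_conj, ← Complex.exp_add]; simp
  constructor
  · exact ⟨Matrix.diagonal ![e, 1], 1, diag_unitary e he, Submonoid.one_mem _, by
      rw [L1 c1 c4 c2 e he, mul_comm]⟩
  · obtain ⟨w, hw1, hw2⟩ : ∃ w : ℂ, w * (starRingEnd ℂ) w = 1 ∧
        w * (starRingEnd ℂ) c2 = c2 := by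
      by_cases h : c2 = 0
      · exact ⟨1, by simp, by simp [h]⟩
      · have hc : (starRingEnd ℂ) c2 ≠ 0 := by simpa using h
        refine ⟨c2 / (starRingEnd ℂ) c2, ?_, ?_⟩
        · rw [map_div₀]
          simp only [Complex.conj_conj]
          field_simp
        · rw [div_mul_eq_mul_div, mul_div_assoc, div_self hc, mul_one]
    have hwe : (w * e) * (starRingEnd ℂ) (w * e) = 1 := by
      rw [RingHom.map_mul]
      calc w * e * ((starRingEnd ℂ) w * (starRingEnd ℂ) e)
          = (w * (starRingEnd ℂ) w) * (e * (starRingEnd ℂ) e) := by ring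
        _ = 1 := by rw [hw1, he]; ring
    refine ⟨Matrix.diagonal ![w * e, 1] * X2, X2, ?_, X2_unitary, ?_⟩
    · exact mul_mem (diag_unitary _ hwe) X2_unitary
    · have hkron : (Matrix.diagonal ![w * e, 1] * X2) ⊗ₖ X2
          = (Matrix.diagonal ![w * e, 1] ⊗ₖ (1 : Matrix (Fin 2) (Fin 2) ℂ)) * (X2 ⊗ₖ X2) := by
        rw [← Matrix.mul_kronecker_mul, Matrix.one_mul]
      rw [hkron, Matrix.conjTranspose_mul]
      rw [show ∀ A B M : Matrix (Fin 2 × Fin 2) (Fin 2 × Fin 2) ℂ,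
        A * B * M * (Bᴴ * Aᴴ) = A * (B * M * Bᴴ) * Aᴴ from fun A B M => by
          simp only [Matrix.mul_assoc]]
      rw [L2, L1 c4 c1 _ _ hwe]
      rw [show w * e * (starRingEnd ℂ) c2 = c2 * e from by linear_combination e * hw2]

end SCaux

open SCaux in
/-- **Theorem 2.** Two two-qubit Schmidt-correlated states are local unitary equivalent
iff their coefficients agree up to a phase on `c2`, possibly after swapping `c1` and `c4`. -/
theorem sc_LU_classification (c1 c4 c1' c4' : ℝ) (c2 c2' : ℂ)
    (hc1 : 0 ≤ c1) (hc4 : 0 ≤ c4) (hsum : c1 + c4 = 1)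
    (hc2 : ‖c2‖ ^ 2 ≤ c1 * c4)
    (hc1' : 0 ≤ c1') (hc4' : 0 ≤ c4') (hsum' : c1' + c4' = 1)
    (hc2' : ‖c2'‖ ^ 2 ≤ c1' * c4') :
    LUequiv (scState c1' c4' c2') (scState c1 c4 c2) ↔
      ∃ δ : ℝ,
        (c1' = c1 ∧ c4' = c4 ∧ c2' = c2 * Complex.exp (δ * Complex.I)) ∨
        (c1' = c4 ∧ c4' = c1 ∧ c2' = c2 * Complex.exp (δ * Complex.I)) := by
  constructor
  · rintro ⟨U1, U2, h1, h2, heq⟩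
    have hU1' : U1ᴴ * U1 = 1 := by
      have := Matrix.mem_unitaryGroup_iff'.mp h1
      rwa [Matrix.star_eq_conjTranspose] at this
    have hU2' : U2ᴴ * U2 = 1 := by
      have := Matrix.mem_unitaryGroup_iff'.mp h2
      rwa [Matrix.star_eq_conjTranspose] at this
    -- partial trace relation
    have hD : Matrix.diagonal ![(c1' : ℂ), (c4' : ℂ)]
        = U1 * Matrix.diagonal ![(c1 : ℂ), (c4 : ℂ)] * U1ᴴ := by
      rw [← ptrace_sc c1 c4 c2, ← ptrace_sc c1' c4' c2']
      ext r t
      have h := ptrace_conj U1 U2 hU2' (scState c1 c4 c2) r t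
      rw [← heq] at h
      simpa using h
    -- first invariant: sum of squares of local eigenvalues
    have hE1 : ((c1' : ℂ))^2 + ((c4' : ℂ))^2 = ((c1 : ℂ))^2 + ((c4 : ℂ))^2 := by
      have h := conj_inv_unitary2 U1 (Matrix.diagonal ![(c1 : ℂ), (c4 : ℂ)]) hU1'
      rw [← hD] at h
      simpa [Matrix.diagonal_mul_diagonal, Matrix.trace_diagonal, Fin.sum_univ_two, sq] using h
    have hR1 : c1'^2 + c4'^2 = c1^2 + c4^2 := by exact_mod_cast hE1
    -- second invariant: purity
    have hVu : (U1 ⊗ₖ U2)ᴴ * (U1 ⊗ₖ U2) = 1 := by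
      rw [kron_conjT, ← Matrix.mul_kronecker_mul, hU1', hU2', Matrix.one_kronecker_one]
    have hE2 : ((c1' : ℂ))^2 + ((c4' : ℂ))^2 + 2 * Complex.normSq c2'
        = ((c1 : ℂ))^2 + ((c4 : ℂ))^2 + 2 * Complex.normSq c2 := by
      have h := conj_inv_unitary (U1 ⊗ₖ U2) (scState c1 c4 c2) hVu
      rw [← heq] at h
      rwa [trsq_sc, trsq_sc] at h
    have hR2 : c1'^2 + c4'^2 + 2 * Complex.normSq c2'
        = c1^2 + c4^2 + 2 * Complex.normSq c2 := by exact_mod_cast hE2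
    have hns : Complex.normSq c2' = Complex.normSq c2 := by linarith
    -- abs equality
    have habs : ‖c2'‖ = ‖c2‖ := by
      rw [Complex.norm_def, Complex.norm_def, hns]
    -- the phase
    refine ⟨Complex.arg c2' - Complex.arg c2, ?_⟩
    have hc2eq : c2' = c2 * Complex.exp (((Complex.arg c2' - Complex.arg c2 : ℝ) : ℂ) * Complex.I) := by
      have h2' := Complex.norm_mul_exp_arg_mul_I c2'
      have h2 := Complex.norm_mul_exp_arg_mul_I c2
      set a := Complex.arg c2 with ha
      set a' := Complex.arg c2' with ha'
      rw [← h2', ← h2, habs, mul_assoc, ← Complex.exp_add]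
      congr 2
      push_cast
      ring
    have hfac : (c1' - c1) * (c1' - c4) = 0 := by nlinarith [hR1, hsum, hsum']
    rcases mul_eq_zero.mp hfac with h | h
    · exact Or.inl ⟨by linarith, by linarith, hc2eq⟩
    · exact Or.inr ⟨by linarith, by linarith, hc2eq⟩
  · rintro ⟨δ, ⟨h1, h4, h2⟩ | ⟨h1, h4, h2⟩⟩
    · rw [h1, h4, h2]; exact (backward c1 c4 c2 δ).1
    · rw [h1, h4, h2]; exact (backward c1 c4 c2 δ).2
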